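/- arXiv:1812.11296 — 2 statements merged into one kernel-verified Lean document; each statement's English description precedes it below -/
import Mathlib

section
/- The quartic hypersurface X = {x₁⁴ + x₂⁴ + x₃⁴ + x₀x₁x₂x₃ + x₄(x₀³ + x₄³) = 0} in ℙ⁴ over ℂ is nonsingular, i.e., there is no point of ℙ⁴ at which the defining polynomial and all its partial derivatives simultaneously vanish. -/
open MvPolynomial

/-- The quartic `x₁⁴ + x₂⁴ + x₃⁴ + x₀x₁x₂x₃ + x₄(x₀³ + x₄³)` in ℙ⁴. -/
noncomputable def quarticX : MvPolynomial (Fin 5) ℂ :=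
  X 1 ^ 4 + X 2 ^ 4 + X 3 ^ 4 + X 0 * X 1 * X 2 * X 3 + X 4 * (X 0 ^ 3 + X 4 ^ 3)

/-- The quartic hypersurface `X = {x₁⁴+x₂⁴+x₃⁴+x₀x₁x₂x₃+x₄(x₀³+x₄³)=0} ⊂ ℙ⁴` is
nonsingular: there is no nonzero point at which the defining polynomial and all of
its partial derivatives simultaneously vanish. -/
theorem stmt0 :
    ¬ ∃ x : Fin 5 → ℂ, x ≠ 0 ∧ eval x quarticX = 0 ∧
      ∀ i : Fin 5, eval x (pderiv i quarticX) = 0 := by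
  rintro ⟨x, hx, -, hd⟩
  have h0 := hd 0
  have h1 := hd 1
  have h2 := hd 2
  have h3 := hd 3
  have h4 := hd 4
  simp only [quarticX, map_add, map_mul, map_pow, pderiv_X, Pi.single_apply] at h0 h1 h2 h3 h4
  simp [quarticX, pderiv_X, Pi.single_apply] at h0 h1 h2 h3 h4
  by_cases ha : x 0 = 0
  · have he : x 4 = 0 := by
      have h : x 4 ^ 3 = 0 := by
        linear_combination (1/4) * h4 - ((x 0)^2/4) * ha
      exact pow_eq_zero_iff (by norm_num) |>.mp h
    have hb : x 1 = 0 := by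
      have h : x 1 ^ 3 = 0 := by
        linear_combination (1/4) * h1 - ((x 3 * x 2)/4) * ha
      exact pow_eq_zero_iff (by norm_num) |>.mp h
    have hc : x 2 = 0 := by
      have h : x 2 ^ 3 = 0 := by
        linear_combination (1/4) * h2 - ((x 3 * x 1)/4) * ha
      exact pow_eq_zero_iff (by norm_num) |>.mp h
    have hdd : x 3 = 0 := by
      have h : x 3 ^ 3 = 0 := by
        linear_combination (1/4) * h3 - ((x 1 * x 2)/4) * ha
      exact pow_eq_zero_iff (by norm_num) |>.mp h
    refine hx (funext fun i => ?_)
    fin_cases i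
    · exact ha
    · exact hb
    · exact hc
    · exact hdd
    · exact he
  · have he : x 4 ≠ 0 := by
      intro he
      apply ha
      have h : x 0 ^ 3 = 0 := by
        linear_combination h4 - 4 * (x 4)^2 * he
      exact pow_eq_zero_iff (by norm_num) |>.mp h
    have m1 : x 1 ^ 4 = -3 * x 4 ^ 4 := by
      linear_combination (x 1/4) * h1 - (x 0/4) * h0 + (3 * x 4/4) * h4
    have m2 : x 2 ^ 4 = -3 * x 4 ^ 4 := by
      linear_combination (x 2/4) * h2 - (x 0/4) * h0 + (3 * x 4/4) * h4
    have m3 : x 3 ^ 4 = -3 * x 4 ^ 4 := by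
      linear_combination (x 3/4) * h3 - (x 0/4) * h0 + (3 * x 4/4) * h4
    have n1 : 3 * x 0 ^ 8 * x 4 ^ 4 = - x 4 ^ 12 := by
      linear_combination ((x 2^4 * x 3^4)/27) * m1 + ((-3 * x 4^4 * x 3^4)/27) * m2
        + ((9 * x 4^8)/27) * m3
        - (((x 1*x 2*x 3)^3 - 3*x 0^2*x 4*(x 1*x 2*x 3)^2
            + 9*x 0^4*x 4^2*(x 1*x 2*x 3) - 27*x 0^6*x 4^3)/27) * h0
    have hA24 : x 0 ^ 24 = 65536 * x 4 ^ 24 := by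
      have hA3 : x 0 ^ 3 = -4 * x 4 ^ 3 := by linear_combination h4
      calc x 0 ^ 24 = (x 0 ^ 3) ^ 8 := by ring
        _ = (-4 * x 4 ^ 3) ^ 8 := by rw [hA3]
        _ = 65536 * x 4 ^ 24 := by ring
    have n2 : 27 * x 0 ^ 24 * x 4 ^ 12 = - x 4 ^ 36 := by
      linear_combination (9 * x 0 ^ 16 * x 4 ^ 8 - 3 * x 0 ^ 8 * x 4 ^ 16 + x 4 ^ 24) * n1
    have hz : (1769473 : ℂ) * x 4 ^ 36 = 0 := by
      linear_combination n2 - 27 * x 4 ^ 12 * hA24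
    have : x 4 ^ 36 = 0 := by
      rcases mul_eq_zero.mp hz with h | h
      · norm_num at h
      · exact h
    exact he (pow_eq_zero_iff (by norm_num) |>.mp this)
end

section
/- For the quartic surface D = {x₀²x₃² + x₀x₁³ + x₃x₂³ + x₀x₁x₂x₃ = 0} ⊂ ℙ³, the singular locus is exactly the two points p = (1:0:0:0) and p' = (0:0:0:1), and at each of these points the local equation has multiplicity 2 with degenerate (rank 1) quadratic part. -/
open MvPolynomial

/-- The quartic surface `D = {x₀²x₃² + x₀x₁³ + x₃x₂³ + x₀x₁x₂x₃ = 0} ⊂ ℙ³`. -/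
noncomputable def quarticD15 : MvPolynomial (Fin 4) ℂ :=
  X 0 ^ 2 * X 3 ^ 2 + X 0 * X 1 ^ 3 + X 3 * X 2 ^ 3 + X 0 * X 1 * X 2 * X 3

/-- Local equation of `D` at `p = (1:0:0:0)` in the chart `x₀ = 1`, with affine
coordinates `(x₁, x₂, x₃) = (X 0, X 1, X 2)`:  `x₃² + x₁³ + x₃x₂³ + x₁x₂x₃`.
By the symmetry `x₀ ↔ x₃, x₁ ↔ x₂`, the local equation at `p' = (0:0:0:1)` is the
same polynomial in the coordinates `(x₂, x₁, x₀)`. -/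
noncomputable def localEqD15 : MvPolynomial (Fin 3) ℂ :=
  X 2 ^ 2 + X 0 ^ 3 + X 2 * X 1 ^ 3 + X 0 * X 1 * X 2

lemma key15 (a b c d : ℂ)
    (h0 : d ^ 2 * (2 * a) + b ^ 3 + d * (c * b) = 0)
    (h1 : a * (3 * b ^ 2) + d * (c * a) = 0)
    (h2 : d * (3 * c ^ 2) + d * (a * b) = 0)
    (h3 : a ^ 2 * (2 * d) + c ^ 3 + a * b * c = 0) :
    b = 0 ∧ c = 0 ∧ (a = 0 ∨ d = 0) := by
  by_cases ha : a = 0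
  · subst ha
    have hc : c = 0 := by
      have h : c ^ 3 = 0 := by linear_combination h3
      exact pow_eq_zero_iff (by norm_num) |>.mp h
    subst hc
    have hb : b = 0 := by
      have h : b ^ 3 = 0 := by linear_combination h0
      exact pow_eq_zero_iff (by norm_num) |>.mp h
    exact ⟨hb, rfl, Or.inl rfl⟩
  · by_cases hd : d = 0
    · subst hd
      have hb : b = 0 := by
        have h : b ^ 3 = 0 := by linear_combination h0
        exact pow_eq_zero_iff (by norm_num) |>.mp h
      subst hb
      have hc : c = 0 := by
        have h : c ^ 3 = 0 := by linear_combination h3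
        exact pow_eq_zero_iff (by norm_num) |>.mp h
      exact ⟨rfl, hc, Or.inr rfl⟩
    · exfalso
      have e1 : d * c + 3 * b ^ 2 = 0 := by
        have h1' : a * (d * c + 3 * b ^ 2) = 0 := by linear_combination h1
        rcases mul_eq_zero.mp h1' with h | h
        · exact absurd h ha
        · exact h
      have e2 : a * b + 3 * c ^ 2 = 0 := by
        have h2' : d * (a * b + 3 * c ^ 2) = 0 := by linear_combination h2
        rcases mul_eq_zero.mp h2' with h | h
        · exact absurd h hd
        · exact h
      have e3 : a * d ^ 2 = b ^ 3 := by linear_combination (1/2) * h0 - (b/2) * e1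
      have e4 : a ^ 2 * d = c ^ 3 := by linear_combination (1/2) * h3 - (c/2) * e2
      by_cases hu : b * c = 0
      · rcases mul_eq_zero.mp hu with hb | hc
        · have hc : c = 0 := by
            have : d * c = 0 := by linear_combination e1 - 3 * b * hb
            rcases mul_eq_zero.mp this with h | h
            · exact absurd h hd
            · exact h
          have : a ^ 2 * d = 0 := by linear_combination e4 + c ^ 2 * hc
          rcases mul_eq_zero.mp this with h | h
          · exact ha (pow_eq_zero_iff (by norm_num) |>.mp h)
          · exact hd h
        · have hb : b = 0 := by
            have : a * b = 0 := by linear_combination e2 - 3 * c * hc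
            rcases mul_eq_zero.mp this with h | h
            · exact absurd h ha
            · exact h
          have : a ^ 2 * d = 0 := by linear_combination e4 + c ^ 2 * hc
          rcases mul_eq_zero.mp this with h | h
          · exact ha (pow_eq_zero_iff (by norm_num) |>.mp h)
          · exact hd h
      · have e5 : (b * c) * (a * d) = (b * c) * (9 * (b * c)) := by
          linear_combination (a * b) * e1 + (-3 * b ^ 2) * e2
        have e6 : a * d = 9 * (b * c) := mul_left_cancel₀ hu e5
        have e7 : (728 : ℂ) * (b * c) ^ 3 = 0 := by
          linear_combination (a ^ 2 * d) * e3 + b ^ 3 * e4 -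
            (a ^ 2 * d ^ 2 + 9 * a * d * (b * c) + 81 * (b * c) ^ 2) * e6
        have : (b * c) ^ 3 = 0 := by
          rcases mul_eq_zero.mp e7 with h | h
          · norm_num at h
          · exact h
        exact hu (pow_eq_zero_iff (by norm_num) |>.mp this)

/-- For `D = {x₀²x₃²+x₀x₁³+x₃x₂³+x₀x₁x₂x₃=0} ⊂ ℙ³`: the singular locus is exactly the
two points `p = (1:0:0:0)` and `p' = (0:0:0:1)`, and at each of them (by the symmetry
`x₀ ↔ x₃, x₁ ↔ x₂` the two local equations coincide) the local equation has
multiplicity 2 with degenerate quadratic part of rank 1 (the square of a nonzero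
linear form). -/
theorem stmt15 :
    (∀ x : Fin 4 → ℂ, x ≠ 0 →
      ((eval x quarticD15 = 0 ∧ ∀ i : Fin 4, eval x (pderiv i quarticD15) = 0) ↔
        ∃ t : ℂ, t ≠ 0 ∧
          (x = (fun i => if i = 0 then t else 0) ∨
           x = (fun i => if i = 3 then t else 0)))) ∧
    localEqD15 ∈
      (Ideal.span {X 0, X 1, X 2} : Ideal (MvPolynomial (Fin 3) ℂ)) ^ 2 ∧
    localEqD15 ∉
      (Ideal.span {X 0, X 1, X 2} : Ideal (MvPolynomial (Fin 3) ℂ)) ^ 3 ∧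
    ∃ ℓ : MvPolynomial (Fin 3) ℂ, ℓ.IsHomogeneous 1 ∧ ℓ ≠ 0 ∧
      homogeneousComponent 2 localEqD15 = ℓ ^ 2 := by
  refine ⟨?_, ?_, ?_, ?_⟩
  · -- singular locus
    intro x hx
    constructor
    · rintro ⟨-, h⟩
      have h0 := h 0
      have h1 := h 1
      have h2 := h 2
      have h3 := h 3
      simp only [quarticD15, map_add, map_mul, map_pow] at h0 h1 h2 h3
      simp [quarticD15, pderiv_mul, pderiv_pow, pderiv_X, Pi.single_apply] at h0 h1 h2 h3
      obtain ⟨hb, hc, had⟩ := key15 (x 0) (x 1) (x 2) (x 3) h0 h1 h2 h3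
      rcases had with ha | hd
      · refine ⟨x 3, ?_, Or.inr ?_⟩
        · intro h3z
          apply hx
          funext i
          fin_cases i <;> simp [ha, hb, hc, h3z]
        · funext i
          fin_cases i <;> simp [ha, hb, hc]
      · refine ⟨x 0, ?_, Or.inl ?_⟩
        · intro h0z
          apply hx
          funext i
          fin_cases i <;> simp [hd, hb, hc, h0z]
        · funext i
          fin_cases i <;> simp [hd, hb, hc]
    · rintro ⟨t, ht, hcase | hcase⟩ <;> subst hcase <;>
        refine ⟨by simp [quarticD15], fun i => ?_⟩ <;>
        fin_cases i <;>
        simp [quarticD15, pderiv_mul, pderiv_pow, pderiv_X, Pi.single_apply]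
  · -- membership in m^2
    set m : Ideal (MvPolynomial (Fin 3) ℂ) := Ideal.span {X 0, X 1, X 2} with hm
    have hm0 : (X 0 : MvPolynomial (Fin 3) ℂ) ∈ m := Ideal.subset_span (by simp)
    have hm1 : (X 1 : MvPolynomial (Fin 3) ℂ) ∈ m := Ideal.subset_span (by simp)
    have hm2 : (X 2 : MvPolynomial (Fin 3) ℂ) ∈ m := Ideal.subset_span (by simp)
    have t1 : (X 2 : MvPolynomial (Fin 3) ℂ) ^ 2 ∈ m ^ 2 := Ideal.pow_mem_pow hm2 2
    have t2 : (X 0 : MvPolynomial (Fin 3) ℂ) ^ 3 ∈ m ^ 2 := by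
      have : (X 0 : MvPolynomial (Fin 3) ℂ) ^ 3 = X 0 * X 0 ^ 2 := by ring
      rw [this]
      exact Ideal.mul_mem_left _ _ (Ideal.pow_mem_pow hm0 2)
    have t3 : (X 2 : MvPolynomial (Fin 3) ℂ) * X 1 ^ 3 ∈ m ^ 2 := by
      have : (X 2 : MvPolynomial (Fin 3) ℂ) * X 1 ^ 3 = (X 2 * X 1) * X 1 ^ 2 := by ring
      rw [this]
      exact Ideal.mul_mem_left _ _ (Ideal.pow_mem_pow hm1 2)
    have t4 : (X 0 : MvPolynomial (Fin 3) ℂ) * X 1 * X 2 ∈ m ^ 2 := by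
      have : (X 0 : MvPolynomial (Fin 3) ℂ) * X 1 * X 2 = X 0 * (X 1 * X 2) := by ring
      rw [this, pow_two]
      exact Ideal.mul_mem_left _ _ (Ideal.mul_mem_mul hm1 hm2)
    exact Ideal.add_mem _ (Ideal.add_mem _ (Ideal.add_mem _ t1 t2) t3) t4
  · -- not in m^3
    intro hmem
    set ψ : MvPolynomial (Fin 3) ℂ →+* Polynomial (MvPolynomial (Fin 3) ℂ) :=
      (aeval (fun i : Fin 3 => Polynomial.C (X i) * Polynomial.X) :
        MvPolynomial (Fin 3) ℂ →ₐ[ℂ] Polynomial (MvPolynomial (Fin 3) ℂ)).toRingHom with hψ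
    have hmap : ψ localEqD15 ∈
        (Ideal.span {Polynomial.X} : Ideal (Polynomial (MvPolynomial (Fin 3) ℂ))) ^ 3 := by
      have h1 : ψ localEqD15 ∈ Ideal.map ψ
          ((Ideal.span {X 0, X 1, X 2} : Ideal (MvPolynomial (Fin 3) ℂ)) ^ 3) :=
        Ideal.mem_map_of_mem ψ hmem
      rw [Ideal.map_pow] at h1
      refine Ideal.pow_right_mono ?_ 3 h1
      rw [Ideal.map_span]
      refine Ideal.span_le.mpr ?_
      rintro y hy
      simp only [Set.mem_image, Set.mem_insert_iff, Set.mem_singleton_iff] at hy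
      obtain ⟨z, hz, rfl⟩ := hy
      rcases hz with rfl | rfl | rfl <;>
        · show (ψ : MvPolynomial (Fin 3) ℂ → _) _ ∈ _
          simp only [hψ, AlgHom.toRingHom_eq_coe, RingHom.coe_coe, aeval_X]
          exact Ideal.mul_mem_left _ _ (Ideal.subset_span rfl)
    rw [Ideal.span_singleton_pow, Ideal.mem_span_singleton] at hmap
    have hcoeff : (ψ localEqD15).coeff 2 = 0 :=
      Polynomial.X_pow_dvd_iff.mp hmap 2 (by norm_num)
    have : (ψ localEqD15).coeff 2 = X 2 ^ 2 := by
      simp only [hψ, localEqD15, AlgHom.toRingHom_eq_coe, RingHom.coe_coe, map_add, map_mul,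
        map_pow, aeval_X]
      ring_nf
      simp only [Polynomial.coeff_add, ← Polynomial.C_pow, Polynomial.coeff_mul_C,
        Polynomial.coeff_C_mul, Polynomial.coeff_mul_X_pow', Polynomial.coeff_X_pow]
      norm_num
      rw [← Polynomial.C_pow, Polynomial.coeff_C_zero]
    rw [this] at hcoeff
    exact pow_ne_zero 2 (X_ne_zero (R := ℂ) (2 : Fin 3)) hcoeff
  · -- quadratic part
    refine ⟨X 2, isHomogeneous_X _ _, X_ne_zero _, ?_⟩
    have hh1 : ((X 2 : MvPolynomial (Fin 3) ℂ) ^ 2).IsHomogeneous 2 := by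
      simpa using (isHomogeneous_X ℂ (2 : Fin 3)).pow 2
    have hh2 : ((X 0 : MvPolynomial (Fin 3) ℂ) ^ 3).IsHomogeneous 3 := by
      simpa using (isHomogeneous_X ℂ (0 : Fin 3)).pow 3
    have hh3 : ((X 2 : MvPolynomial (Fin 3) ℂ) * X 1 ^ 3).IsHomogeneous 4 := by
      simpa using (isHomogeneous_X ℂ (2 : Fin 3)).mul ((isHomogeneous_X ℂ (1 : Fin 3)).pow 3)
    have hh4 : ((X 0 : MvPolynomial (Fin 3) ℂ) * X 1 * X 2).IsHomogeneous 3 := by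
      simpa using ((isHomogeneous_X ℂ (0 : Fin 3)).mul (isHomogeneous_X ℂ (1 : Fin 3))).mul
        (isHomogeneous_X ℂ (2 : Fin 3))
    have c1 : homogeneousComponent 2 ((X 2 : MvPolynomial (Fin 3) ℂ) ^ 2) = X 2 ^ 2 := by
      rw [homogeneousComponent_of_mem ((mem_homogeneousSubmodule _ _).mpr hh1), if_pos rfl]
    have c2 : homogeneousComponent 2 ((X 0 : MvPolynomial (Fin 3) ℂ) ^ 3) = 0 := by
      rw [homogeneousComponent_of_mem ((mem_homogeneousSubmodule _ _).mpr hh2)]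
      norm_num
    have c3 : homogeneousComponent 2 ((X 2 : MvPolynomial (Fin 3) ℂ) * X 1 ^ 3) = 0 := by
      rw [homogeneousComponent_of_mem ((mem_homogeneousSubmodule _ _).mpr hh3)]
      norm_num
    have c4 : homogeneousComponent 2 ((X 0 : MvPolynomial (Fin 3) ℂ) * X 1 * X 2) = 0 := by
      rw [homogeneousComponent_of_mem ((mem_homogeneousSubmodule _ _).mpr hh4)]
      norm_num
    rw [localEqD15, map_add, map_add, map_add, c1, c2, c3, c4]
    ring
end
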